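/- Let k be a field and Q a commutative k-algebra of finite dimension n ≥ 1 as a k-vector space, generated as a k-algebra by a subset s ⊆ Q. Then the monomials of degree at most n − 1 in the elements of s (i.e., all products of fewer than n elements of s, together with 1) span Q as a k-vector space. -/
import Mathlib


/-- Let `k` be a field and `Q` a commutative `k`-algebra of finite
dimension `n ≥ 1`, generated as a `k`-algebra by a subset `s ⊆ Q`.  Then the products
of fewer than `n` elements of `s` (the empty product being `1`) span `Q` as a
`k`-vector space. -/
theorem stmt11 {k Q : Type*} [Field k] [CommRing Q] [Algebra k Q]
    [FiniteDimensional k Q] (n : ℕ) (hn : 1 ≤ n)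
    (hdim : Module.finrank k Q = n)
    (s : Set Q) (hgen : Algebra.adjoin k s = ⊤) :
    Submodule.span k
      {q : Q | ∃ l : List Q, (∀ x ∈ l, x ∈ s) ∧ l.length < n ∧ l.prod = q} = ⊤ := by
  set A : ℕ → Set Q :=
    fun i => {q : Q | ∃ l : List Q, (∀ x ∈ l, x ∈ s) ∧ l.length ≤ i ∧ l.prod = q} with hA
  set V : ℕ → Submodule k Q := fun i => Submodule.span k (A i) with hV
  have hone : ∀ i, (1 : Q) ∈ A i := fun i => ⟨[], by simp⟩
  have hmono : ∀ {i j : ℕ}, i ≤ j → V i ≤ V j := by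
    intro i j hij
    apply Submodule.span_mono
    rintro q ⟨l, hl, hlen, hprod⟩
    exact ⟨l, hl, hlen.trans hij, hprod⟩
  have hstep : ∀ i, V (i + 1) ≤ V 1 * V i := by
    intro i
    rw [hV, Submodule.span_le]
    rintro q ⟨l, hl, hlen, hprod⟩
    cases l with
    | nil =>
        have : q = 1 * 1 := by simp [← hprod]
        rw [this]
        exact Submodule.mul_mem_mul (Submodule.subset_span (hone 1))
          (Submodule.subset_span (hone i))
    | cons a l' =>
        have : q = a * l'.prod := by simp [← hprod]
        rw [this]
        exact Submodule.mul_mem_mul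
          (Submodule.subset_span ⟨[a], by simpa using hl a (by simp), by simp, by simp⟩)
          (Submodule.subset_span ⟨l', fun x hx => hl x (by simp [hx]),
            by simp at hlen ⊢; omega, rfl⟩)
  have hmul : ∀ i, V 1 * V i ≤ V (i + 1) := by
    intro i
    rw [hV, Submodule.span_mul_span]
    apply Submodule.span_mono
    rintro q ⟨x, ⟨l1, hl1, hlen1, hx⟩, y, ⟨l2, hl2, hlen2, hy⟩, rfl⟩
    exact ⟨l1 ++ l2, by
      intro z hz
      rcases List.mem_append.mp hz with h | h
      · exact hl1 z h
      · exact hl2 z h, by simp; omega, by simp [hx, hy]⟩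
  have hstable : ∀ i, V i = V (i + 1) → ∀ j, V (i + j) = V i := by
    intro i hi j
    induction j with
    | zero => rfl
    | succ j ih =>
        refine le_antisymm ?_ (hmono (by omega))
        calc V (i + (j + 1)) ≤ V 1 * V (i + j) := hstep _
          _ = V 1 * V i := by rw [ih]
          _ ≤ V (i + 1) := hmul i
          _ = V i := hi.symm
  -- the chain must stabilize before step n
  have hexists : ∃ i < n, V i = V (i + 1) := by
    by_contra hcon
    push_neg at hcon
    have hrank : ∀ i ≤ n, i + 1 ≤ Module.finrank k (V i) := by
      intro i
      induction i with
      | zero =>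
          intro _
          have hne : V 0 ≠ ⊥ := by
            intro hbot
            have h1 : (1 : Q) ∈ V 0 := Submodule.subset_span (hone 0)
            rw [hbot, Submodule.mem_bot] at h1
            have : Nontrivial Q := Module.nontrivial_of_finrank_pos (R := k) (by omega)
            exact one_ne_zero h1
          have h0 : Module.finrank k (V 0) ≠ 0 :=
            fun h => hne (Submodule.finrank_eq_zero.mp h)
          omega
      | succ i ih =>
          intro hin
          have hlt : V i < V (i + 1) :=
            lt_of_le_of_ne (hmono (by omega)) (hcon i (by omega))
          have := Submodule.finrank_lt_finrank_of_lt hlt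
          have := ih (by omega)
          omega
    have h1 := hrank n le_rfl
    have h2 : Module.finrank k (V n) ≤ Module.finrank k Q := Submodule.finrank_le _
    omega
  obtain ⟨i, hin, hi⟩ := hexists
  have htop : V i = ⊤ := by
    refine le_antisymm le_top ?_
    have hadj : Subalgebra.toSubmodule (Algebra.adjoin k s)
        = Submodule.span k (Submonoid.closure s : Set Q) := Algebra.adjoin_eq_span k s
    have : (⊤ : Submodule k Q) = Submodule.span k (Submonoid.closure s : Set Q) := by
      rw [← hadj, hgen, Algebra.top_toSubmodule]
    rw [this, Submodule.span_le]
    intro x hx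
    obtain ⟨l, hl, hprod⟩ := Submonoid.exists_list_of_mem_closure hx
    have hxA : x ∈ A l.length := ⟨l, hl, le_rfl, hprod⟩
    have : x ∈ V l.length := Submodule.subset_span hxA
    have hle : V l.length ≤ V (i + l.length) := hmono (by omega)
    rw [hstable i hi l.length] at hle
    exact hle this
  have hseteq : {q : Q | ∃ l : List Q, (∀ x ∈ l, x ∈ s) ∧ l.length < n ∧ l.prod = q}
      = A (n - 1) := by
    ext q
    constructor
    · rintro ⟨l, hl, hlen, hprod⟩; exact ⟨l, hl, by omega, hprod⟩
    · rintro ⟨l, hl, hlen, hprod⟩; exact ⟨l, hl, by omega, hprod⟩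
  rw [hseteq]
  exact le_antisymm le_top (le_trans (le_of_eq htop.symm) (hmono (by omega)))
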